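/- Let n, p, q be positive integers, Σ an n×n positive definite real matrix, τ a nonzero real number, and X an n×(p+q) real matrix whose columns are indexed by Fin p ⊕ Fin q; write X_pri for the n×p submatrix of X consisting of the columns indexed by the first summand, and let K be the (p+q)×(p+q) block-diagonal matrix with blocks 0 (of size p×p) and the q×q identity. Then the matrix Xᵀ Σ⁻¹ X + (1/τ²) K is positive definite if and only if the p columns of X_pri are linearly independent. -/

import Mathlib

open Matrix

lemma quad_conj {m k : Type*} [Fintype m] [Fintype k]
    (A : Matrix m m ℝ) (B : Matrix m k ℝ) (x : k → ℝ) :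
    x ⬝ᵥ ((Bᵀ * A * B) *ᵥ x) = (B *ᵥ x) ⬝ᵥ (A *ᵥ (B *ᵥ x)) := by
  rw [← mulVec_mulVec, ← mulVec_mulVec, dotProduct_mulVec, vecMul_transpose]

theorem stmt_6 (n p q : ℕ) (hn : 0 < n) (hp : 0 < p) (hq : 0 < q)
    (Cov : Matrix (Fin n) (Fin n) ℝ) (hCov : Cov.PosDef)
    (τ : ℝ) (hτ : τ ≠ 0)
    (X : Matrix (Fin n) (Fin p ⊕ Fin q) ℝ)
    (K : Matrix (Fin p ⊕ Fin q) (Fin p ⊕ Fin q) ℝ)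
    (hK : K = Matrix.fromBlocks 0 0 0 1) :
    (Xᵀ * Cov⁻¹ * X + (1 / τ ^ 2) • K).PosDef ↔
      LinearIndependent ℝ (fun j : Fin p => fun i : Fin n => X i (Sum.inl j)) := by
  have hinv : (Cov⁻¹).PosDef := hCov.inv
  have hc : (0:ℝ) < 1 / τ ^ 2 := by positivity
  -- quadratic form of K
  have hKquad : ∀ x : Fin p ⊕ Fin q → ℝ,
      x ⬝ᵥ (K *ᵥ x) = ∑ j : Fin q, x (Sum.inr j) ^ 2 := by
    intro x
    subst hK
    simp [dotProduct, Fintype.sum_sum_type, mulVec, Matrix.fromBlocks, sq, mul_comm,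
      Matrix.one_apply, Finset.mul_sum, mul_ite, mul_zero, mul_one]
  have hXv : ∀ x : Fin p ⊕ Fin q → ℝ, X *ᵥ x =
      (∑ j : Fin p, x (Sum.inl j) • fun i => X i (Sum.inl j)) +
      (∑ j : Fin q, x (Sum.inr j) • fun i => X i (Sum.inr j)) := by
    intro x
    funext i
    simp [mulVec, dotProduct, Fintype.sum_sum_type, mul_comm]
  constructor
  · intro hPD
    rw [Fintype.linearIndependent_iff]
    intro g hg j
    by_contra hgj
    set v : Fin p ⊕ Fin q → ℝ := Sum.elim g 0 with hv
    have hvne : v ≠ 0 := by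
      intro h
      exact hgj (congrFun h (Sum.inl j))
    have hXvz : X *ᵥ v = 0 := by
      rw [hXv]
      simp only [hv, Sum.elim_inl, Sum.elim_inr, Pi.zero_apply, zero_smul,
        Finset.sum_const_zero, add_zero]
      exact hg
    have := hPD.dotProduct_mulVec_pos hvne
    rw [show star v = v from rfl, add_mulVec, dotProduct_add, quad_conj, hXvz,
      smul_mulVec, dotProduct_smul, hKquad] at this
    simp [hv] at this
  · intro hLI
    refine posDef_iff_dotProduct_mulVec.mpr ⟨?_, ?_⟩
    · have h1 : (Xᵀ * Cov⁻¹ * X).IsHermitian := by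
        have := isHermitian_conjTranspose_mul_mul X hinv.1
        simpa [show Xᴴ = Xᵀ from rfl] using this
      have h2 : K.IsHermitian := by
        subst hK
        unfold Matrix.IsHermitian
        ext i j
        rcases i with i|i <;> rcases j with j|j <;>
          simp [Matrix.fromBlocks, conjTranspose_apply, Matrix.one_apply, eq_comm]
      show _ = _
      rw [conjTranspose_add, conjTranspose_smul, h1, h2]
      simp
    · intro x hx
      rw [show star x = x from rfl, add_mulVec, dotProduct_add, quad_conj,
        smul_mulVec, dotProduct_smul, hKquad]
      have hA : 0 ≤ (X *ᵥ x) ⬝ᵥ (Cov⁻¹ *ᵥ (X *ᵥ x)) := by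
        rcases eq_or_ne (X *ᵥ x) 0 with h | h
        · simp [h]
        · exact le_of_lt (hinv.dotProduct_mulVec_pos h)
      have hB : 0 ≤ ∑ j : Fin q, x (Sum.inr j) ^ 2 :=
        Finset.sum_nonneg fun j _ => sq_nonneg _
      rcases lt_or_eq_of_le hA with hA' | hA'
      · have : 0 ≤ (1/τ^2) • ∑ j : Fin q, x (Sum.inr j) ^ 2 := by
          simp only [smul_eq_mul]; positivity
        linarith
      rcases lt_or_eq_of_le hB with hB' | hB'
      · have : 0 < (1/τ^2) • ∑ j : Fin q, x (Sum.inr j) ^ 2 := by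
          simp only [smul_eq_mul]; positivity
        linarith
      -- both zero: derive contradiction
      exfalso
      have hxr : ∀ j : Fin q, x (Sum.inr j) = 0 := by
        intro j
        have := Finset.sum_eq_zero_iff_of_nonneg (fun j _ => sq_nonneg (x (Sum.inr j)))
          |>.mp hB'.symm j (Finset.mem_univ j)
        exact pow_eq_zero_iff (two_ne_zero) |>.mp this
      have hXx : X *ᵥ x = 0 := by
        rcases eq_or_ne (X *ᵥ x) 0 with h | h
        · exact h
        · exact absurd hA'.symm (ne_of_gt (hinv.dotProduct_mulVec_pos h))
      have hcomb : (∑ j : Fin p, x (Sum.inl j) • fun i => X i (Sum.inl j)) = 0 := by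
        have := hXv x
        rw [hXx] at this
        simp only [hxr, zero_smul, Finset.sum_const_zero, add_zero] at this
        exact this.symm
      have hxl : ∀ j : Fin p, x (Sum.inl j) = 0 :=
        Fintype.linearIndependent_iff.mp hLI _ hcomb
      apply hx
      funext j
      rcases j with j|j
      · simpa using hxl j
      · simpa using hxr j
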